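/- Let k be a field of characteristic 0 (or of characteristic > d). Suppose det_d = c₁ℓ₁^d + ⋯ + c_rℓ_r^d for scalars c_i ∈ k and linear forms ℓ_i ∈ k[x_{1,1},…,x_{d,d}] with coefficient matrices A_i (so ℓ_i = Σ_{j,l} (A_i)_{j,l} x_{j,l}). Then at least one of the matrices A_i is invertible, i.e. det(A_i) ≠ 0 for some i. In other words, no power sum decomposition of det_d consists entirely of linear forms with singular coefficient matrices. -/

import Mathlib

open MvPolynomial

/-- The generic d×d determinant, a form of degree `d` in the `d²` variables `x_{i,j}`. -/
noncomputable def detd (k : Type*) [CommRing k] (d : ℕ) : MvPolynomial (Fin d × Fin d) k :=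
  Matrix.det (Matrix.of fun i j : Fin d => X (i, j))

/-- The linear form with coefficient matrix `A`, namely `ℓ = Σ_{j,l} A_{j,l} x_{j,l}`. -/
noncomputable def linFormM {k : Type*} [CommRing k] {d : ℕ}
    (A : Matrix (Fin d) (Fin d) k) : MvPolynomial (Fin d × Fin d) k :=
  ∑ ij : Fin d × Fin d, C (A ij.1 ij.2) * X ij

section Aux

variable {k : Type*} [CommRing k] {d : ℕ}

/-- Iterated partial derivative along a list of variables, as a linear map. -/
noncomputable def applyDerivs (l : List (Fin d × Fin d)) :
    MvPolynomial (Fin d × Fin d) k →ₗ[k] MvPolynomial (Fin d × Fin d) k :=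
  l.foldr (fun v f => (pderiv v).toLinearMap ∘ₗ f) LinearMap.id

@[simp] lemma applyDerivs_nil (p : MvPolynomial (Fin d × Fin d) k) :
    applyDerivs [] p = p := rfl

@[simp] lemma applyDerivs_cons (v : Fin d × Fin d) (l : List (Fin d × Fin d))
    (p : MvPolynomial (Fin d × Fin d) k) :
    applyDerivs (v :: l) p = pderiv v (applyDerivs l p) := rfl

lemma pderiv_linFormM (A : Matrix (Fin d) (Fin d) k) (v : Fin d × Fin d) :
    pderiv v (linFormM A) = C (A v.1 v.2) := by
  classical
  rw [linFormM, map_sum]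
  rw [Finset.sum_eq_single v]
  · simp
  · intro b _ hb
    simp [pderiv_C_mul, pderiv_X_of_ne hb]
  · simp

lemma applyDerivs_linFormM_pow (A : Matrix (Fin d) (Fin d) k) :
    ∀ (l : List (Fin d × Fin d)) (n : ℕ), l.length ≤ n →
      applyDerivs l (linFormM A ^ n) =
        C ((n.descFactorial l.length : k) * (l.map fun v => A v.1 v.2).prod) *
          linFormM A ^ (n - l.length)
  | [], n, _ => by simp
  | v :: l, n, hn => by
    have hl : l.length ≤ n := le_trans (Nat.le_succ _) (by simpa using hn)
    rw [applyDerivs_cons, applyDerivs_linFormM_pow A l n hl, pderiv_C_mul, pderiv_pow,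
      pderiv_linFormM]
    have hcast : ((n - l.length : ℕ) : MvPolynomial (Fin d × Fin d) k)
        = C ((n - l.length : ℕ) : k) := by
      simp
    rw [hcast]
    have hexp : n - l.length - 1 = n - (v :: l).length := by
      simp [Nat.sub_sub, Nat.add_comm]
    rw [hexp]
    have hdf : (((n.descFactorial (v :: l).length : ℕ)) : k) *
        ((v :: l).map fun w => A w.1 w.2).prod
        = (n.descFactorial l.length : k) *
            (l.map fun w => A w.1 w.2).prod * (((n - l.length : ℕ) : k) * A v.1 v.2) := by
      simp only [List.length_cons, Nat.descFactorial_succ, List.map_cons, List.prod_cons]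
      push_cast
      ring
    rw [hdf]
    simp only [map_mul]
    ring

lemma sum_single_apply_eq_zero (v : Fin d × Fin d) :
    ∀ l : List (Fin d × Fin d), v ∉ l →
      ((l.map fun w => Finsupp.single w 1).sum : (Fin d × Fin d) →₀ ℕ) v = 0
  | [], _ => by simp
  | w :: l, hv => by
    simp only [List.mem_cons, not_or] at hv
    rw [List.map_cons, List.sum_cons, Finsupp.add_apply,
      Finsupp.single_eq_of_ne hv.1, sum_single_apply_eq_zero v l hv.2]

lemma applyDerivs_monomial (s : (Fin d × Fin d) →₀ ℕ) (a : k) :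
    ∀ (l : List (Fin d × Fin d)), l.Nodup →
      applyDerivs l (monomial s a) =
        monomial (s - (l.map fun v => Finsupp.single v 1).sum)
          (a * (l.map fun v => (s v : k)).prod)
  | [], _ => by simp
  | v :: l, hnd => by
    have hv : v ∉ l := (List.nodup_cons.mp hnd).1
    have hnd' : l.Nodup := (List.nodup_cons.mp hnd).2
    rw [applyDerivs_cons, applyDerivs_monomial s a l hnd', pderiv_monomial]
    have hTv : ((s - (l.map fun w => Finsupp.single w 1).sum : (Fin d × Fin d) →₀ ℕ)) v
        = s v := by
      rw [Finsupp.tsub_apply, sum_single_apply_eq_zero v l hv, Nat.sub_zero]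
    have hexp : s - (l.map fun w => Finsupp.single w 1).sum - Finsupp.single v 1
        = s - ((v :: l).map fun w => Finsupp.single w 1).sum := by
      rw [tsub_tsub, List.map_cons, List.sum_cons, add_comm]
    rw [hTv, hexp]
    congr 1
    simp only [List.map_cons, List.prod_cons]
    ring

lemma prod_X_eq (f : Fin d → Fin d × Fin d) :
    (∏ i, (X (f i) : MvPolynomial (Fin d × Fin d) k)) =
      monomial (∑ i, Finsupp.single (f i) 1) 1 := by
  classical
  induction (Finset.univ : Finset (Fin d)) using Finset.induction_on with
  | empty => simp
  | @insert a s hx ih =>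
    rw [Finset.prod_insert hx, Finset.sum_insert hx, ih]
    show monomial (Finsupp.single _ 1) 1 * _ = _
    rw [monomial_mul, one_mul]

lemma constantCoeff_applyDerivs_monomial (σ τ : Equiv.Perm (Fin d)) (a : k) :
    constantCoeff (applyDerivs (List.ofFn fun i => (τ i, i))
        (monomial (∑ i, Finsupp.single ((σ i : Fin d), i) 1) a)) =
      if τ = σ then a else 0 := by
  classical
  have hinj : Function.Injective fun i : Fin d => ((τ i : Fin d), i) := by
    intro i j hij
    exact congrArg Prod.snd hij
  rw [applyDerivs_monomial _ _ _ (List.nodup_ofFn.mpr hinj), List.map_ofFn, List.map_ofFn,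
    List.sum_ofFn, List.prod_ofFn]
  have hS : ∀ i : Fin d, (∑ j, Finsupp.single ((σ j : Fin d), j) 1) ((τ i : Fin d), i)
      = if σ i = τ i then 1 else 0 := by
    intro i
    rw [Finsupp.finset_sum_apply]
    rw [Finset.sum_eq_single i]
    · rw [Finsupp.single_apply]
      by_cases h : σ i = τ i
      · rw [if_pos (by rw [h]), if_pos h]
      · rw [if_neg (by simpa using h), if_neg h]
    · intro j _ hj
      exact Finsupp.single_eq_of_ne (by simp [hj.symm])
    · simp
  by_cases hτσ : τ = σ
  · subst hτσ
    rw [if_pos rfl]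
    have h1 : (∑ i : Fin d, Finsupp.single ((τ i : Fin d), i) 1)
        - ∑ i : Fin d, ((fun v : Fin d × Fin d => Finsupp.single v 1) ∘
          fun i : Fin d => ((τ i : Fin d), i)) i = 0 := by
      simp [Function.comp]
    have h2 : ∀ i : Fin d,
        ((fun v : Fin d × Fin d =>
            (((∑ j, Finsupp.single ((τ j : Fin d), j) 1) v : ℕ) : k)) ∘
          fun i : Fin d => ((τ i : Fin d), i)) i = 1 := by
      intro i
      simp only [Function.comp, hS i, if_pos rfl]
      norm_num
    rw [h1]
    rw [Finset.prod_congr rfl fun i _ => h2 i]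
    simp
  · rw [if_neg hτσ]
    obtain ⟨i, hi⟩ : ∃ i, τ i ≠ σ i := by
      by_contra hcon
      push_neg at hcon
      exact hτσ (Equiv.ext hcon)
    have : ((fun v : Fin d × Fin d =>
            (((∑ j, Finsupp.single ((σ j : Fin d), j) 1) v : ℕ) : k)) ∘
          fun i : Fin d => ((τ i : Fin d), i)) i = 0 := by
      have hne' : ¬ (σ i = τ i) := fun h => hi h.symm
      simp only [Function.comp, hS i, if_neg hne']
      norm_num
    rw [Finset.prod_eq_zero (Finset.mem_univ i) this, mul_zero, monomial_zero, map_zero]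

lemma detd_eq_sum_monomial :
    detd k d = ∑ σ : Equiv.Perm (Fin d),
      monomial (∑ i, Finsupp.single ((σ i : Fin d), i) 1)
        (((Equiv.Perm.sign σ : ℤ) : k)) := by
  rw [detd, Matrix.det_apply']
  refine Finset.sum_congr rfl fun σ _ => ?_
  have : (∏ i, (Matrix.of fun i j : Fin d => (X (i, j) : MvPolynomial (Fin d × Fin d) k)) (σ i) i)
      = monomial (∑ i, Finsupp.single ((σ i : Fin d), i) 1) 1 := by
    rw [← prod_X_eq fun i : Fin d => ((σ i : Fin d), i)]
    rfl
  rw [this]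
  rw [show (((Equiv.Perm.sign σ : ℤ) : MvPolynomial (Fin d × Fin d) k))
      = C (((Equiv.Perm.sign σ : ℤ) : k)) from (map_intCast (C : k →+* MvPolynomial (Fin d × Fin d) k) _).symm, C_mul_monomial, mul_one]

lemma Phi_detd :
    ∑ τ : Equiv.Perm (Fin d), ((Equiv.Perm.sign τ : ℤ) : k) *
      constantCoeff (applyDerivs (List.ofFn fun i => ((τ i : Fin d), i)) (detd k d))
    = (d.factorial : k) := by
  classical
  have : ∀ τ : Equiv.Perm (Fin d),
      constantCoeff (applyDerivs (List.ofFn fun i => ((τ i : Fin d), i)) (detd k d))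
      = ((Equiv.Perm.sign τ : ℤ) : k) := by
    intro τ
    rw [detd_eq_sum_monomial, map_sum, map_sum]
    rw [Finset.sum_congr rfl fun σ _ => constantCoeff_applyDerivs_monomial σ τ _]
    simp
  rw [Finset.sum_congr rfl fun τ _ => by rw [this τ]]
  have hsq : ∀ τ : Equiv.Perm (Fin d),
      ((Equiv.Perm.sign τ : ℤ) : k) * ((Equiv.Perm.sign τ : ℤ) : k) = 1 := by
    intro τ
    rcases Int.units_eq_one_or (Equiv.Perm.sign τ) with h | h <;> rw [h] <;> norm_num
  rw [Finset.sum_congr rfl fun τ _ => hsq τ]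
  simp [Fintype.card_perm]

lemma Phi_pow (c' : k) (B : Matrix (Fin d) (Fin d) k) :
    ∑ τ : Equiv.Perm (Fin d), ((Equiv.Perm.sign τ : ℤ) : k) *
      constantCoeff (applyDerivs (List.ofFn fun i => ((τ i : Fin d), i))
        (C c' * linFormM B ^ d))
    = c' * (d.factorial : k) * B.det := by
  classical
  have hstep : ∀ τ : Equiv.Perm (Fin d),
      constantCoeff (applyDerivs (List.ofFn fun i => ((τ i : Fin d), i))
        (C c' * linFormM B ^ d))
      = c' * ((d.factorial : k) * ∏ i, B (τ i) i) := by
    intro τ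
    rw [C_mul', map_smul, constantCoeff_smul, smul_eq_mul]
    congr 1
    have hlen : (List.ofFn fun i : Fin d => ((τ i : Fin d), i)).length = d := by
      simp
    rw [applyDerivs_linFormM_pow B _ d (le_of_eq hlen), hlen]
    rw [List.map_ofFn, List.prod_ofFn]
    simp [Nat.descFactorial_self, Function.comp]
  rw [Finset.sum_congr rfl fun τ _ => by rw [hstep τ]]
  rw [Matrix.det_apply']
  rw [Finset.mul_sum]
  refine Finset.sum_congr rfl fun τ _ => ?_
  ring

end Aux

/-- Over a field of characteristic `0` or `> d`, in any power sum decomposition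
`det_d = Σ c_i ℓ_i^d` at least one of the coefficient matrices of the linear forms `ℓ_i`
is invertible. -/
theorem det_decomposition_has_invertible_matrix {k : Type*} [Field k] {d : ℕ}
    (hchar : ringChar k = 0 ∨ d < ringChar k) {r : ℕ}
    (c : Fin r → k) (A : Fin r → Matrix (Fin d) (Fin d) k)
    (h : detd k d = ∑ i, C (c i) * linFormM (A i) ^ d) :
    ∃ i, (A i).det ≠ 0 := by
  classical
  by_contra hcon
  push_neg at hcon
  have H := congrArg (fun p : MvPolynomial (Fin d × Fin d) k =>
    ∑ τ : Equiv.Perm (Fin d), ((Equiv.Perm.sign τ : ℤ) : k) *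
      constantCoeff (applyDerivs (List.ofFn fun i => ((τ i : Fin d), i)) p)) h
  rw [Phi_detd] at H
  have hrhs : (∑ τ : Equiv.Perm (Fin d), ((Equiv.Perm.sign τ : ℤ) : k) *
      constantCoeff (applyDerivs (List.ofFn fun i => ((τ i : Fin d), i))
        (∑ i, C (c i) * linFormM (A i) ^ d))) = 0 := by
    have : ∀ τ : Equiv.Perm (Fin d),
        ((Equiv.Perm.sign τ : ℤ) : k) *
          constantCoeff (applyDerivs (List.ofFn fun i => ((τ i : Fin d), i))
            (∑ i, C (c i) * linFormM (A i) ^ d))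
        = ∑ i, ((Equiv.Perm.sign τ : ℤ) : k) *
            constantCoeff (applyDerivs (List.ofFn fun i => ((τ i : Fin d), i))
              (C (c i) * linFormM (A i) ^ d)) := by
      intro τ
      rw [map_sum, map_sum, Finset.mul_sum]
    rw [Finset.sum_congr rfl fun τ _ => this τ, Finset.sum_comm]
    rw [Finset.sum_congr rfl fun i _ => Phi_pow (c i) (A i)]
    simp [hcon]
  rw [hrhs] at H
  -- now H : (d.factorial : k) = 0, contradiction with char assumption
  have hne : (d.factorial : k) ≠ 0 := by
    rcases hchar with h0 | hlt
    · have : CharP k 0 := h0 ▸ ringChar.charP k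
      haveI : CharZero k := CharP.charP_to_charZero k
      exact_mod_cast Nat.cast_ne_zero.mpr d.factorial_ne_zero
    · have hp : (ringChar k).Prime := by
        rcases CharP.char_is_prime_or_zero k (ringChar k) with hp | h0
        · exact hp
        · omega
      intro h0
      have hdvd : ringChar k ∣ d.factorial :=
        (CharP.cast_eq_zero_iff k (ringChar k) _).mp h0
      have := (Nat.Prime.dvd_factorial hp).mp hdvd
      omega
  exact hne H
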